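/- Let ω be a primitive p-th root of unity in ℂ for an odd prime p = 2r+1 with r ≥ 3. Then ((ω+ω⁻¹)(ω²+ω⁻²)⋯(ω^(r-1)+ω^(1-r)))² = (ω^(r+1)/(ω+1))². -/

import Mathlib

open Finset Polynomial

lemma eval_prod_roots {p : ℕ} (hp : 0 < p) {ζ : ℂ} (hζ : IsPrimitiveRoot ζ p) (x : ℂ) :
    x ^ p - 1 = ∏ j ∈ Finset.range p, (x - ζ ^ j) := by
  have h := X_pow_sub_one_eq_prod hp hζ
  have h2 := congrArg (Polynomial.eval x) h
  simp only [eval_sub, eval_pow, eval_X, eval_one, eval_prod, eval_sub, eval_C] at h2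
  rw [h2]
  rw [nthRootsFinset, ← Multiset.toFinset_eq (hζ.nthRoots_one_nodup), Finset.prod_mk,
    hζ.nthRoots_eq (one_pow p), Multiset.map_map]
  simp [Finset.prod, Multiset.range]
  rfl

lemma prod_one_add {p : ℕ} (hp : 0 < p) (hodd : Odd p) {ζ : ℂ} (hζ : IsPrimitiveRoot ζ p) :
    ∏ j ∈ Finset.Icc 1 (p-1), (1 + ζ ^ j) = 1 := by
  have h := eval_prod_roots hp hζ (-1)
  rw [hodd.neg_one_pow] at h
  have hrange : Finset.range p = insert 0 (Finset.Icc 1 (p-1)) := by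
    ext j; simp [Finset.mem_range, Finset.mem_Icc]; omega
  rw [hrange, Finset.prod_insert (by simp)] at h
  have h2 : ∀ j ∈ Finset.Icc 1 (p-1), (-1 - ζ ^ j) = -(1 + ζ ^ j) := by intros; ring
  rw [Finset.prod_congr rfl h2] at h
  have h3 : ∀ j ∈ Finset.Icc 1 (p-1), -(1 + ζ ^ j) = (-1) * (1 + ζ ^ j) := by intros; ring
  rw [Finset.prod_congr rfl h3, Finset.prod_mul_distrib, Finset.prod_const] at h
  simp only [pow_zero] at h
  rcases Nat.even_or_odd (#(Finset.Icc 1 (p-1))) with he | ho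
  · rw [he.neg_one_pow] at h
    have := Nat.card_Icc 1 (p-1)
    linear_combination (1/2 : ℂ) * h
  · exfalso
    rw [Nat.card_Icc] at ho
    obtain ⟨s, hs⟩ := ho
    obtain ⟨t, ht⟩ := hodd
    omega

/-- Let `ω` be a primitive `p`-th root of unity in `ℂ` for an odd prime `p = 2r+1` with
`r ≥ 3`. Then `((ω+ω⁻¹)(ω²+ω⁻²)⋯(ω^(r-1)+ω^(1-r)))² = (ω^(r+1)/(ω+1))²`. -/
theorem halfspin_char_square (p r : ℕ) (hp : p.Prime) (hodd : Odd p)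
    (hr : 3 ≤ r) (hpr : p = 2 * r + 1) (ω : ℂ) (hω : IsPrimitiveRoot ω p) :
    (∏ i ∈ Finset.Icc 1 (r - 1), (ω ^ (i : ℤ) + ω ^ (-(i : ℤ)))) ^ 2
      = (ω ^ (r + 1) / (ω + 1)) ^ 2 := by
  have hppos : 0 < p := by omega
  have hωp : ω ^ p = 1 := hω.pow_eq_one
  have hω0 : ω ≠ 0 := by
    intro h; rw [h, zero_pow hppos.ne'] at hωp; exact one_ne_zero hωp.symm
  have hω1 : ω + 1 ≠ 0 := by
    intro h
    have hm : ω = -1 := by linear_combination h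
    have h2 : ω ^ 2 = 1 := by rw [hm]; ring
    have := Nat.le_of_dvd (by norm_num) (hω.dvd_of_pow_eq_one 2 h2)
    omega
  set ζ : ℂ := ω ^ 2 with hζdef
  have hζ : IsPrimitiveRoot ζ p := hω.pow_of_coprime 2
    ((Nat.coprime_primes Nat.prime_two hp).mpr (by omega))
  have hζp : ζ ^ p = 1 := hζ.pow_eq_one
  -- names
  set A : ℂ := ∏ i ∈ Finset.Icc 1 r, (1 + ζ ^ i) with hA
  set B : ℂ := ∏ i ∈ Finset.Icc 1 (r-1), (1 + ζ ^ i) with hB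
  set Q : ℂ := ∏ i ∈ Finset.Icc 1 (r-1), ω ^ i with hQ
  set P : ℂ := ∏ i ∈ Finset.Icc 1 (r - 1), (ω ^ (i : ℤ) + ω ^ (-(i : ℤ))) with hP
  have hQ0 : Q ≠ 0 := Finset.prod_ne_zero_iff.mpr fun i _ => pow_ne_zero i hω0
  -- split product over Icc 1 (p-1)
  have hsplit : Finset.Icc 1 (p-1) = Finset.Icc 1 r ∪ Finset.Icc (r+1) (p-1) := by
    ext j; simp only [Finset.mem_Icc, Finset.mem_union]; omega
  have hdisj : Disjoint (Finset.Icc 1 r) (Finset.Icc (r+1) (p-1)) := by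
    rw [Finset.disjoint_left]; intro j hj hj'
    simp only [Finset.mem_Icc] at hj hj'; omega
  have hone : A * ∏ j ∈ Finset.Icc (r+1) (p-1), (1 + ζ ^ j) = 1 := by
    rw [hA, ← Finset.prod_union hdisj, ← hsplit]
    exact prod_one_add hppos hodd hζ
  -- reindex the second product
  have hre : ∏ j ∈ Finset.Icc (r+1) (p-1), (1 + ζ ^ j)
      = ∏ i ∈ Finset.Icc 1 r, (1 + ζ ^ (p - i)) := by
    refine Finset.prod_nbij' (fun j => p - j) (fun i => p - i) ?_ ?_ ?_ ?_ ?_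
    · intro a ha; simp only [Finset.mem_Icc] at ha ⊢; omega
    · intro a ha; simp only [Finset.mem_Icc] at ha ⊢; omega
    · intro a ha; simp only [Finset.mem_Icc] at ha; omega
    · intro a ha; simp only [Finset.mem_Icc] at ha; omega
    · intro a ha; simp only [Finset.mem_Icc] at ha
      congr 2; omega
  -- key: ζ^i * (1 + ζ^(p-i)) = 1 + ζ^i for i in Icc 1 r
  have hpair : ∀ i ∈ Finset.Icc 1 r, ζ ^ i * (1 + ζ ^ (p - i)) = 1 + ζ ^ i := by
    intro i hi; simp only [Finset.mem_Icc] at hi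
    have : ζ ^ i * ζ ^ (p - i) = 1 := by
      rw [← pow_add, Nat.add_sub_cancel' (by omega : i ≤ p), hζp]
    ring_nf
    linear_combination this
  -- A^2 = ∏ ζ^i over Icc 1 r
  have hAsq : A ^ 2 = ∏ i ∈ Finset.Icc 1 r, ζ ^ i := by
    have : A * ((∏ i ∈ Finset.Icc 1 r, ζ ^ i) * ∏ i ∈ Finset.Icc 1 r, (1 + ζ ^ (p - i)))
        = A * A := by
      rw [← Finset.prod_mul_distrib, Finset.prod_congr rfl hpair]
    rw [← hre] at this
    calc A ^ 2 = A * A := sq A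
    _ = A * ((∏ i ∈ Finset.Icc 1 r, ζ ^ i) * ∏ j ∈ Finset.Icc (r+1) (p-1), (1 + ζ ^ j)) := this.symm
    _ = (∏ i ∈ Finset.Icc 1 r, ζ ^ i) * (A * ∏ j ∈ Finset.Icc (r+1) (p-1), (1 + ζ ^ j)) := by ring
    _ = ∏ i ∈ Finset.Icc 1 r, ζ ^ i := by rw [hone, mul_one]
  -- ∏ ζ^i = (Q * ω^r)^2
  have hT : ∏ i ∈ Finset.Icc 1 r, ζ ^ i = (Q * ω ^ r) ^ 2 := by
    have h1 : ∀ i ∈ Finset.Icc 1 r, ζ ^ i = ω ^ i * ω ^ i := by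
      intro i hi; rw [hζdef, ← pow_mul, two_mul, pow_add]
    rw [Finset.prod_congr rfl h1, Finset.prod_mul_distrib]
    have h2 : ∏ i ∈ Finset.Icc 1 r, ω ^ i = Q * ω ^ r := by
      have := Finset.prod_Icc_succ_top (a := 1) (b := r - 1)
        (by omega) (fun i => ω ^ i)
      rw [hQ]
      have hrr : r - 1 + 1 = r := by omega
      rw [hrr] at this
      exact this
    rw [h2]; ring
  -- P * Q = B
  have hPQ : P * Q = B := by
    rw [hP, hQ, hB, ← Finset.prod_mul_distrib]
    refine Finset.prod_congr rfl fun i hi => ?_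
    have hωi : (ω ^ i : ℂ) = ω ^ (i : ℤ) := (zpow_natCast ω i).symm
    have hz : ω ^ (i : ℤ) * ω ^ (-(i : ℤ)) = 1 := by
      rw [← zpow_add₀ hω0]; simp
    have hζi : ζ ^ i = ω ^ (i : ℤ) * ω ^ (i : ℤ) := by
      rw [hζdef, ← pow_mul, two_mul, pow_add, hωi]
    rw [hωi, hζi]
    linear_combination hz
  -- B * (1 + ζ^r) = A
  have hBA : B * (1 + ζ ^ r) = A := by
    rw [hB, hA]
    have := Finset.prod_Icc_succ_top (a := 1) (b := r - 1)
      (by omega) (fun i => 1 + ζ ^ i)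
    have hrr : r - 1 + 1 = r := by omega
    rw [hrr] at this
    exact this.symm
  -- ω * (1 + ζ^r) = ω + 1
  have hd : ω * (1 + ζ ^ r) = ω + 1 := by
    have : ω * ζ ^ r = 1 := by
      rw [hζdef, ← pow_mul, ← pow_succ', ← hpr]  -- ω * ω^(2r) = ω^(2r+1)
      exact hωp
    linear_combination this
  -- combine
  have key : (P * Q * (1 + ζ ^ r)) ^ 2 = (Q * ω ^ r) ^ 2 := by
    rw [hPQ, hBA, hAsq, hT]
  have main : P ^ 2 * (ω + 1) ^ 2 * Q ^ 2 = (ω ^ (r + 1)) ^ 2 * Q ^ 2 := by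
    calc P ^ 2 * (ω + 1) ^ 2 * Q ^ 2 = (P * Q * (1 + ζ ^ r)) ^ 2 * ω ^ 2 := by
          rw [← hd]; ring
    _ = (Q * ω ^ r) ^ 2 * ω ^ 2 := by rw [key]
    _ = (ω ^ (r + 1)) ^ 2 * Q ^ 2 := by ring
  have main2 : P ^ 2 * (ω + 1) ^ 2 = (ω ^ (r + 1)) ^ 2 :=
    mul_right_cancel₀ (pow_ne_zero 2 hQ0) main
  rw [div_pow, eq_div_iff (pow_ne_zero 2 hω1)]
  exact main2
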